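/- Let p be a prime and a a positive integer, and let A be the adjacency matrix of the modified divisor prime graph G*_Dp(p^a). Then (1 + √(4a+1))/2 and (1 − √(4a+1))/2 are eigenvalues of A, and the rank of A equals 2 (equivalently, 0 is an eigenvalue of multiplicity a − 1). -/

import Mathlib

/-- `(1 + √(4a+1))/2` and `(1 - √(4a+1))/2` are eigenvalues of the adjacency matrix `A`
of the modified divisor prime graph of `p ^ a`, and the rank of `A` equals `2`
(equivalently, `0` is an eigenvalue of multiplicity `a - 1`). -/
theorem eigenvalues_modifiedDivisorPrimeGraph_primePow (p a : ℕ) (hp : p.Prime) (ha : 0 < a)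
    (A : Matrix {d : ℕ // d ∈ (p ^ a).divisors} {d : ℕ // d ∈ (p ^ a).divisors} ℝ)
    (hA : ∀ u v : {d : ℕ // d ∈ (p ^ a).divisors},
      A u v = if Nat.gcd u.1 v.1 = 1 then 1 else 0) :
    (∃ Y : {d : ℕ // d ∈ (p ^ a).divisors} → ℝ, Y ≠ 0 ∧
        A.mulVec Y = ((1 + Real.sqrt (4 * (a : ℝ) + 1)) / 2) • Y) ∧
    (∃ Y : {d : ℕ // d ∈ (p ^ a).divisors} → ℝ, Y ≠ 0 ∧
        A.mulVec Y = ((1 - Real.sqrt (4 * (a : ℝ) + 1)) / 2) • Y) ∧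
    A.rank = 2 := by
  have hpa : p ^ a ≠ 0 := pow_ne_zero _ hp.pos.ne'
  have h1mem : 1 ∈ (p ^ a).divisors := Nat.one_mem_divisors.mpr hpa
  let ι := {d : ℕ // d ∈ (p ^ a).divisors}
  let one : ι := ⟨1, h1mem⟩
  have hpmem : p ∈ (p ^ a).divisors := Nat.mem_divisors.mpr ⟨dvd_pow_self p ha.ne', hpa⟩
  let pe : ι := ⟨p, hpmem⟩
  have hne : pe ≠ one := by
    intro h
    exact hp.ne_one (congrArg Subtype.val h)
  have hdvd : ∀ u : ι, u = one ∨ p ∣ u.1 := by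
    intro u
    obtain ⟨k, -, hk⟩ := (Nat.dvd_prime_pow hp).mp (Nat.mem_divisors.mp u.2).1
    rcases Nat.eq_zero_or_pos k with h0 | h0
    · left; exact Subtype.ext (by simp [hk, h0, one])
    · right; rw [hk]; exact dvd_pow_self p h0.ne'
  have hA' : ∀ u v : ι, A u v = if u = one ∨ v = one then 1 else 0 := by
    intro u v
    rw [hA]
    congr 1
    simp only [eq_iff_iff]
    constructor
    · intro hg
      by_contra hc
      push_neg at hc
      obtain ⟨hu, hv⟩ := hc
      have h1 := (hdvd u).resolve_left hu
      have h2 := (hdvd v).resolve_left hv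
      have : p ∣ Nat.gcd u.1 v.1 := Nat.dvd_gcd h1 h2
      rw [hg] at this
      exact hp.ne_one (Nat.dvd_one.mp this)
    · rintro (rfl | rfl)
      · exact Nat.gcd_one_left _
      · exact Nat.gcd_one_right _
  have hmul : ∀ (Y : ι → ℝ) (u : ι),
      A.mulVec Y u = if u = one then ∑ v, Y v else Y one := by
    intro Y u
    by_cases hu : u = one
    · simp only [Matrix.mulVec, dotProduct, hu, if_true]
      refine Finset.sum_congr rfl fun v _ => ?_
      rw [hA']
      simp
    · simp only [Matrix.mulVec, dotProduct, hu, if_false]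
      rw [Finset.sum_congr rfl (fun v _ => by
        rw [hA']; simp [hu] : ∀ v ∈ Finset.univ, A u v * Y v = if v = one then Y v else 0)]
      simp
  have hcard : (Fintype.card ι : ℝ) = (a : ℝ) + 1 := by
    have : Fintype.card ι = a + 1 := by
      rw [show Fintype.card ι = (p ^ a).divisors.card from Fintype.card_coe _,
        Nat.divisors_prime_pow hp, Finset.card_map, Finset.card_range]
    rw [this]; push_cast; ring
  -- sum of the eigenvector candidate
  have hsum : ∀ lam : ℝ, (∑ v : ι, (if v = one then lam else 1)) = lam + (a : ℝ) := by
    intro lam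
    have : ∀ v : ι, (if v = one then lam else 1) = (if v = one then lam - 1 else 0) + 1 := by
      intro v; by_cases h : v = one <;> simp [h]
    rw [Finset.sum_congr rfl fun v _ => this v, Finset.sum_add_distrib,
      Finset.sum_ite_eq' Finset.univ one (fun _ => lam - 1)]
    simp only [Finset.sum_const, Finset.card_univ, nsmul_eq_mul, mul_one]
    rw [hcard]
    simp only [Finset.mem_univ, if_true]
    ring
  have key : ∀ lam : ℝ, lam * lam = lam + a →
      ∃ Y : ι → ℝ, Y ≠ 0 ∧ A.mulVec Y = lam • Y := by
    intro lam hlam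
    refine ⟨fun v => if v = one then lam else 1, ?_, ?_⟩
    · intro h
      have := congrFun h pe
      simp [hne] at this
    · funext u
      rw [hmul]
      by_cases hu : u = one
      · simp only [hu, if_true, Pi.smul_apply, smul_eq_mul]
        rw [hsum]
        rw [← hlam]
      · simp [hu, hne]
  have hs : Real.sqrt (4 * (a : ℝ) + 1) * Real.sqrt (4 * (a : ℝ) + 1) = 4 * (a : ℝ) + 1 :=
    Real.mul_self_sqrt (by positivity)
  refine ⟨key _ (by linear_combination hs / 4), key _ (by linear_combination hs / 4), ?_⟩
  -- rank
  classical
  set g : ι → ℝ := fun u => if u = one then 1 else 0 with hg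
  set f : ι → ℝ := fun u => if u = one then 0 else 1 with hf
  have hdecomp : ∀ Y : ι → ℝ, A.mulVec Y = (∑ v, Y v) • g + (Y one) • f := by
    intro Y
    funext u
    rw [hmul]
    by_cases hu : u = one <;> simp [hu, hg, hf]
  have hge : A.mulVec (fun v => if v = pe then 1 else 0) = g := by
    rw [hdecomp]
    simp [Finset.sum_ite_eq' Finset.univ pe (fun _ => (1:ℝ)), hne.symm]
  have hfe : A.mulVec (fun v => if v = one then 1 else 0) = g + f := by
    rw [hdecomp]
    simp [Finset.sum_ite_eq' Finset.univ one (fun _ => (1:ℝ))]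
  have hrange : LinearMap.range A.mulVecLin = Submodule.span ℝ {g, f} := by
    apply le_antisymm
    · rintro x ⟨Y, rfl⟩
      rw [Matrix.mulVecLin_apply, hdecomp Y]
      exact Submodule.add_mem _
        (Submodule.smul_mem _ _ (Submodule.subset_span (Or.inl rfl)))
        (Submodule.smul_mem _ _ (Submodule.subset_span (Or.inr rfl)))
    · rw [Submodule.span_le]
      rintro x (rfl | rfl)
      · exact ⟨fun v => if v = pe then 1 else 0, hge⟩
      · refine ⟨(fun v => if v = one then 1 else 0) - (fun v => if v = pe then 1 else 0), ?_⟩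
        rw [Matrix.mulVecLin_apply, Matrix.mulVec_sub, hge, hfe]
        abel
  have hli : LinearIndependent ℝ ![g, f] := by
    rw [LinearIndependent.pair_iff]
    intro s t hst
    constructor
    · have := congrFun hst one
      simpa [hg, hf] using this
    · have := congrFun hst pe
      simpa [hg, hf, hne] using this
  have hrank : A.rank = 2 := by
    rw [Matrix.rank, hrange]
    have : ({g, f} : Set (ι → ℝ)) = Set.range ![g, f] := by
      simp [Set.range_subset_iff]
      ext x
      simp [Matrix.range_cons, Matrix.range_empty]
      tauto
    rw [this, finrank_span_eq_card hli]
    simp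
  exact hrank
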